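/- Let I ⊆ F_q[x₁,…,x_n] be a zero-dimensional ideal with irredundant primary decomposition I = I₁ ∩ ⋯ ∩ I_t into pairwise comaximal primary ideals, and for each i set J_i = ⋂_{j ≠ i} I_j. Then there exist polynomials h₁, …, h_t ∈ F_q[x₁,…,x_n] such that: (1) h_i ∈ J_i and h_i ∉ I_i for each i; (2) h_i² ≡ h_i (mod I) for each i; (3) h_i·h_j ∈ I whenever i ≠ j; and (4) the residues h̄₁, …, h̄_t form an F_q-basis of Ker(Ψ_I), so that Ker(Ψ_I) is the internal direct sum of the one-dimensional F_q-algebras F_q·h̄₁, …, F_q·h̄_t. -/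

import Mathlib

set_option maxHeartbeats 1000000
set_option synthInstance.maxHeartbeats 400000

open Polynomial in
lemma my_prod_X_sub_C (Fq : Type*) [Field Fq] [Fintype Fq] :
    ∏ c : Fq, (X - C c) = X ^ (Fintype.card Fq) - X := by
  have hm : (X ^ Fintype.card Fq - X : Fq[X]).Monic := by
    apply (monic_X_pow _).sub_of_left
    rw [degree_X, degree_X_pow]
    exact_mod_cast Fintype.one_lt_card
  have hcard : (X ^ Fintype.card Fq - X : Fq[X]).roots.card =
      (X ^ Fintype.card Fq - X : Fq[X]).natDegree := by
    rw [FiniteField.roots_X_pow_card_sub_X,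
      FiniteField.X_pow_card_sub_X_natDegree_eq Fq Fintype.one_lt_card]
    simp
  have := prod_multiset_X_sub_C_of_monic_of_roots_card_eq hm hcard
  rw [FiniteField.roots_X_pow_card_sub_X] at this
  rw [← this]
  rfl

lemma my_prod_sub_C {Fq : Type*} [Field Fq] [Fintype Fq] {A : Type*} [CommRing A] [Algebra Fq A]
    (g : A) : ∏ c : Fq, (g - algebraMap Fq A c) = g ^ (Fintype.card Fq) - g := by
  have := congrArg (Polynomial.aeval g) (my_prod_X_sub_C Fq)
  simpa using this

lemma my_key {Fq : Type*} [Field Fq] [Fintype Fq] {A : Type*} [CommRing A] [Algebra Fq A]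
    (K : Ideal A) (hK : K.IsPrimary) (g : A) (hg : g ^ (Fintype.card Fq) - g ∈ K) :
    ∃ c : Fq, g - algebraMap Fq A c ∈ K := by
  classical
  obtain ⟨hKne, hKprim⟩ := Ideal.isPrimary_iff.mp hK
  have hprod : ∏ c : Fq, (g - algebraMap Fq A c) ∈ K := by
    rw [my_prod_sub_C]; exact hg
  haveI hrad : (K.radical).IsPrime := Ideal.isPrime_radical hK
  have hprodrad : ∏ c : Fq, (g - algebraMap Fq A c) ∈ K.radical :=
    Ideal.le_radical hprod
  obtain ⟨c, -, hc⟩ := Ideal.IsPrime.prod_mem_iff.mp hprodrad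
  refine ⟨c, ?_⟩
  have hsplit : (g - algebraMap Fq A c) * ∏ c' ∈ Finset.univ.erase c, (g - algebraMap Fq A c') ∈ K := by
    rw [Finset.mul_prod_erase Finset.univ (fun c' => g - algebraMap Fq A c') (Finset.mem_univ c)]
    exact hprod
  rcases hKprim hsplit with h1 | h2
  · exact h1
  · exfalso
    obtain ⟨c', hc', hc'rad⟩ := Ideal.IsPrime.prod_mem_iff.mp h2
    have hne : c' ≠ c := Finset.ne_of_mem_erase hc'
    have : algebraMap Fq A (c' - c) ∈ K.radical := by
      have := K.radical.sub_mem hc hc'rad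
      rw [map_sub]
      simpa using this
    have hunit : IsUnit (algebraMap Fq A (c' - c)) := by
      apply IsUnit.map
      exact isUnit_iff_ne_zero.mpr (sub_ne_zero.mpr hne)
    exact hrad.1 (K.radical.eq_top_of_isUnit_mem this hunit)

/-- Let `I ⊆ F_q[x₁,…,x_n]` be a zero-dimensional ideal with irredundant primary
decomposition `I = I₁ ∩ ⋯ ∩ I_t` into pairwise comaximal primary ideals, and set
`J_i = ⋂_{j ≠ i} I_j`.  Then there are polynomials `h₁, …, h_t` with `h_i ∈ J_i`,
`h_i ∉ I_i`, `h_i² ≡ h_i (mod I)`, `h_i h_j ∈ I` for `i ≠ j`, and whose residues form an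
`F_q`-basis of `Ker(Ψ_I) = {f̄ : f̄^q = f̄}`; thus `Ker(Ψ_I)` is the internal direct sum of
the one-dimensional `F_q`-algebras `F_q·h̄_i`. -/
theorem exists_orthogonal_idempotent_basis_of_ker_psi
    {Fq : Type*} [Field Fq] [Fintype Fq] (n t : ℕ)
    (I : Fin t → Ideal (MvPolynomial (Fin n) Fq))
    (hprimary : ∀ i, (I i).IsPrimary)
    (hcomax : ∀ i j, i ≠ j → I i ⊔ I j = ⊤)
    (hirred : ∀ i, ¬ (⨅ j, ⨅ _ : j ≠ i, I j) ≤ I i)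
    (hzerodim : FiniteDimensional Fq (MvPolynomial (Fin n) Fq ⧸ (⨅ i, I i))) :
    ∃ h : Fin t → MvPolynomial (Fin n) Fq,
      (∀ i, h i ∈ ⨅ j, ⨅ _ : j ≠ i, I j) ∧
      (∀ i, h i ∉ I i) ∧
      (∀ i, (h i) ^ 2 - h i ∈ ⨅ j, I j) ∧
      (∀ i j, i ≠ j → h i * h j ∈ ⨅ j', I j') ∧
      LinearIndependent Fq (fun i => Ideal.Quotient.mk (⨅ j, I j) (h i)) ∧
      (∀ f : MvPolynomial (Fin n) Fq ⧸ (⨅ j, I j),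
        f ∈ Submodule.span Fq (Set.range fun i => Ideal.Quotient.mk (⨅ j, I j) (h i)) ↔
          f ^ Fintype.card Fq = f) := by
  classical
  set R := MvPolynomial (Fin n) Fq with hR
  set q := Fintype.card Fq with hq
  have hIne : ∀ i, I i ≠ ⊤ := fun i => (Ideal.isPrimary_iff.mp (hprimary i)).1
  -- comaximality of I i with the rest
  have hsup : ∀ i, I i ⊔ (⨅ j, ⨅ _ : j ≠ i, I j) = ⊤ := by
    intro i
    have hcop : IsCoprime (I i) (∏ j ∈ Finset.univ.erase i, I j) := by
      apply IsCoprime.prod_right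
      intro j hj
      rw [Ideal.isCoprime_iff_sup_eq]
      exact hcomax i j (Finset.ne_of_mem_erase hj).symm
    have htop := Ideal.isCoprime_iff_sup_eq.mp hcop
    have hle : (∏ j ∈ Finset.univ.erase i, I j) ≤ ⨅ j, ⨅ _ : j ≠ i, I j := by
      refine le_iInf fun j => le_iInf fun hj => ?_
      exact le_trans Ideal.prod_le_inf (Finset.inf_le (by simp [hj]))
    exact eq_top_iff.mpr (htop ▸ sup_le_sup_left hle _)
  -- choose h
  have hexists : ∀ i, ∃ b ∈ (⨅ j, ⨅ _ : j ≠ i, I j), 1 - b ∈ I i := by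
    intro i
    have h1 : (1 : R) ∈ I i ⊔ (⨅ j, ⨅ _ : j ≠ i, I j) := (hsup i).symm ▸ Submodule.mem_top
    obtain ⟨a, ha, b, hb, hab⟩ := Submodule.mem_sup.1 h1
    exact ⟨b, hb, by rw [← hab]; simpa using ha⟩
  choose h hhJ hh1 using hexists
  have hmem : ∀ i j, i ≠ j → h i ∈ I j := by
    intro i j hij
    have := hhJ i
    simp only [Submodule.mem_iInf] at this
    exact this j (Ne.symm hij)
  -- the key congruence: ∑ C (c i) * h i ≡ C (c j) mod I j
  have hcongr : ∀ (c : Fin t → Fq) (j : Fin t),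
      (∑ i, MvPolynomial.C (c i) * h i) - MvPolynomial.C (c j) ∈ I j := by
    intro c j
    rw [← Ideal.Quotient.eq]
    rw [map_sum]
    rw [Finset.sum_eq_single j]
    · rw [map_mul]
      have : Ideal.Quotient.mk (I j) (h j) = 1 := by
        rw [← map_one (Ideal.Quotient.mk (I j)), Ideal.Quotient.eq]
        simpa using (I j).neg_mem (hh1 j)
      rw [this, mul_one]
    · intro i _ hij
      rw [map_mul, Ideal.Quotient.eq_zero_iff_mem.mpr (hmem i j hij), mul_zero]
    · simp
  set mkI := Ideal.Quotient.mk (⨅ j, I j) with hmkI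
  have hmkC : ∀ a : Fq, mkI (MvPolynomial.C a) = algebraMap Fq (MvPolynomial (Fin n) Fq ⧸ (⨅ j, I j)) a := by
    intro a
    rfl
  have hsum : ∀ c : Fin t → Fq,
      mkI (∑ i, MvPolynomial.C (c i) * h i) = ∑ i, c i • mkI (h i) := by
    intro c
    rw [map_sum]
    refine Finset.sum_congr rfl fun i _ => ?_
    rw [map_mul, hmkC]; exact (Algebra.smul_def _ _).symm
  have hidem : ∀ i, (h i) ^ 2 - h i ∈ ⨅ j, I j := by
    intro i
    rw [Submodule.mem_iInf]
    intro j
    by_cases hij : i = j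
    · subst hij
      have : h i ^ 2 - h i = -(h i * (1 - h i)) := by ring
      rw [this]
      exact (I i).neg_mem ((I i).mul_mem_left _ (hh1 i))
    · have hi := hmem i j hij
      exact (I j).sub_mem (by rw [sq]; exact (I j).mul_mem_left _ hi) hi
  have horth : ∀ i j, i ≠ j → h i * h j ∈ ⨅ j', I j' := by
    intro i j hij
    rw [Submodule.mem_iInf]
    intro k
    by_cases hik : i = k
    · subst hik
      exact (I i).mul_mem_left _ (hmem j i (Ne.symm hij))
    · exact (I k).mul_mem_right _ (hmem i k hik)
  have he2 : ∀ i, mkI (h i) * mkI (h i) = mkI (h i) := by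
    intro i
    rw [← map_mul, Ideal.Quotient.eq]
    simpa [sq] using hidem i
  have he0 : ∀ i j, i ≠ j → mkI (h i) * mkI (h j) = 0 := by
    intro i j hij
    rw [← map_mul, Ideal.Quotient.eq_zero_iff_mem]
    exact horth i j hij
  have hpow : ∀ (c : Fin t → Fq) (m : ℕ),
      (∑ i, c i • mkI (h i)) ^ (m + 1) = ∑ i, (c i ^ (m + 1)) • mkI (h i) := by
    intro c m
    induction m with
    | zero => simp
    | succ m ih =>
      rw [pow_succ, ih, Finset.sum_mul_sum]
      refine Finset.sum_congr rfl fun i _ => ?_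
      rw [Finset.sum_eq_single i]
      · rw [smul_mul_smul_comm, he2, ← pow_succ]
      · intro j _ hji
        rw [smul_mul_smul_comm, he0 i j (Ne.symm hji), smul_zero]
      · simp
  refine ⟨h, hhJ, ?_, hidem, horth, ?_, ?_⟩
  · -- h i ∉ I i
    intro i hin
    exact hIne i ((I i).eq_top_of_isUnit_mem (by simpa using (I i).add_mem (hh1 i) hin) isUnit_one)
  · -- linear independence
    rw [Fintype.linearIndependent_iff]
    intro c hc i0
    have hmem0 : (∑ i, MvPolynomial.C (c i) * h i) ∈ I i0 := by
      have h0 : mkI (∑ i, MvPolynomial.C (c i) * h i) = 0 := by rw [hsum]; exact hc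
      have h2 := Ideal.Quotient.eq_zero_iff_mem.mp h0
      rw [Submodule.mem_iInf] at h2
      exact h2 i0
    have hC : MvPolynomial.C (c i0) ∈ I i0 := by
      have := (I i0).sub_mem hmem0 (hcongr c i0)
      simpa using this
    by_contra hne
    exact hIne i0 ((I i0).eq_top_of_isUnit_mem hC
      (IsUnit.map MvPolynomial.C (isUnit_iff_ne_zero.mpr hne)))
  · -- span characterization
    intro f
    obtain ⟨m, hm⟩ : ∃ m, q = m + 1 := ⟨q - 1, (Nat.succ_pred_eq_of_pos Fintype.card_pos).symm⟩
    constructor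
    · intro hf
      obtain ⟨c, hc⟩ := Submodule.mem_span_range_iff_exists_fun Fq |>.mp hf
      rw [← hc, hm, hpow]
      refine Finset.sum_congr rfl fun i _ => ?_
      rw [← hm]
      rw [FiniteField.pow_card]
    · intro hf
      obtain ⟨g, rfl⟩ := Ideal.Quotient.mk_surjective f
      have hgmem : g ^ q - g ∈ ⨅ j, I j := by
        rw [← Ideal.Quotient.eq_zero_iff_mem, map_sub, map_pow]
        rw [show Ideal.Quotient.mk (⨅ j, I j) g = mkI g from rfl] at hf ⊢
        rw [hf, sub_self]
      have hcex : ∀ j, ∃ c : Fq, g - MvPolynomial.C c ∈ I j := by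
        intro j
        have hj : g ^ q - g ∈ I j := by
          rw [Submodule.mem_iInf] at hgmem; exact hgmem j
        have := my_key (I j) (hprimary j) g hj
        simpa [MvPolynomial.algebraMap_eq] using this
      choose c hc using hcex
      rw [Submodule.mem_span_range_iff_exists_fun]
      refine ⟨c, ?_⟩
      rw [← hsum, Ideal.Quotient.eq]
      rw [Submodule.mem_iInf]
      intro j
      have := (I j).sub_mem (hcongr c j) (hc j)
      simpa using this
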